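/- Let d ≥ 3 and 1 ≤ k ≤ d−2 be integers, let p be an IDF prime for (d,k), and let r be the unique integer with 0 ≤ r ≤ k and p ∣ d−r. Let α, β, x be rational numbers with α ≠ 0, β ≠ 0, x ≠ 0 and v_p(x) = 0. If f_{α,β}(x) ≠ 0, then v_p(f_{α,β}(x)) ≥ min{v_p(α), v_p(β)}. Moreover, if min{v_p(α), v_p(β)} is attained by exactly one of v_p(α), v_p(β) and is strictly smaller than v_p(α) + v_p(d−r), then f_{α,β}(x) ≠ 0 and v_p(f_{α,β}(x)) = min{v_p(α), v_p(β)}. -/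

import Mathlib

open Finset Function

/-- The coefficient `b_i` of `z^(d-i)` in the normalized dynamical Belyi polynomial
`B_{d,k}`. -/
def belyiCoeff (d k i : ℕ) : ℚ :=
  ((-1 : ℚ) ^ (k - i) / ((k - i).factorial * i.factorial)) *
    ∏ j ∈ (Finset.range (k + 1)).erase i, ((d : ℚ) - (j : ℚ))

/-- The normalized dynamical Belyi polynomial `B_{d,k}` as a function on `ℚ`. -/
def belyi (d k : ℕ) (z : ℚ) : ℚ :=
  ∑ i ∈ Finset.range (k + 1), belyiCoeff d k i * z ^ (d - i)

/-- The map `f_{a,c}(z) = a · B_{d,k}(z) + c`. -/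
def belyiMap (d k : ℕ) (a c z : ℚ) : ℚ := a * belyi d k z + c

/-- `p` is an index divisor free (IDF) prime for the pair `(d,k)`:
`p` is a prime with `p > k`, `p ∣ d - r` for some `r ≤ k`, and `r ∤ v_p(d-r)`. -/
def IsIDFPrime (d k p : ℕ) : Prop :=
  p.Prime ∧ k < p ∧ ∃ r ≤ k, p ∣ (d - r) ∧ ¬ (r ∣ padicValNat p (d - r))

/-- A rational number is `p`-integral if it is zero or has nonnegative `p`-adic valuation. -/
def PIntegral (p : ℕ) (x : ℚ) : Prop := x = 0 ∨ 0 ≤ padicValRat p x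

section helpers

variable {p : ℕ} [hp : Fact p.Prime]

lemma padicValRat_prod (S : Finset ℕ) (F : ℕ → ℚ) (h : ∀ i ∈ S, F i ≠ 0) :
    padicValRat p (∏ i ∈ S, F i) = ∑ i ∈ S, padicValRat p (F i) := by
  classical
  induction S using Finset.induction with
  | empty => simp [padicValRat.one]
  | @insert a s ha ih =>
    rw [Finset.prod_insert ha, Finset.sum_insert ha,
      padicValRat.mul (h a (Finset.mem_insert_self a s))
        (Finset.prod_ne_zero_iff.2 fun i hi => h i (Finset.mem_insert_of_mem hi)),
      ih fun i hi => h i (Finset.mem_insert_of_mem hi)]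

lemma padicValRat_sum_ge (S : Finset ℕ) (F : ℕ → ℚ) (c : ℤ)
    (h : ∀ i ∈ S, F i = 0 ∨ c ≤ padicValRat p (F i)) :
    (∑ i ∈ S, F i) = 0 ∨ c ≤ padicValRat p (∑ i ∈ S, F i) := by
  classical
  induction S using Finset.induction with
  | empty => simp
  | @insert a s ha ih =>
    rw [Finset.sum_insert ha]
    rcases h a (Finset.mem_insert_self a s) with h1 | h1
    · rw [h1, zero_add]
      exact ih fun i hi => h i (Finset.mem_insert_of_mem hi)
    · rcases ih (fun i hi => h i (Finset.mem_insert_of_mem hi)) with h2 | h2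
      · rw [h2, add_zero]; exact Or.inr h1
      · by_cases h0 : F a + ∑ i ∈ s, F i = 0
        · exact Or.inl h0
        · exact Or.inr (le_trans (le_min h1 h2) (padicValRat.min_le_padicValRat_add h0))

end helpers

/-- Valuation of the image of a point with valuation zero under
`f_{α,β}`. -/
theorem padicValRat_belyiMap_of_val_eq_zero (d k p r : ℕ) (hd : 3 ≤ d) (hk1 : 1 ≤ k)
    (hk2 : k ≤ d - 2) (hp : IsIDFPrime d k p) (hr : r ≤ k) (hpr : p ∣ (d - r))
    (hidf : ¬ (r ∣ padicValNat p (d - r)))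
    (α β x : ℚ) (hα : α ≠ 0) (hβ : β ≠ 0) (hx : x ≠ 0)
    (hvx : padicValRat p x = 0) :
    (belyiMap d k α β x ≠ 0 →
      min (padicValRat p α) (padicValRat p β) ≤ padicValRat p (belyiMap d k α β x)) ∧
    (padicValRat p α ≠ padicValRat p β →
      min (padicValRat p α) (padicValRat p β) <
        padicValRat p α + (padicValNat p (d - r) : ℤ) →
      belyiMap d k α β x ≠ 0 ∧
        padicValRat p (belyiMap d k α β x) =
          min (padicValRat p α) (padicValRat p β)) := by
  obtain ⟨hprime, hkp, -⟩ := hp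
  haveI : Fact p.Prime := ⟨hprime⟩
  have hkd : k < d := by omega
  have hrd : r < d := lt_of_le_of_lt hr hkd
  -- casts
  have hcast : ∀ j : ℕ, j ≤ k → ((d : ℚ) - j) = ((d - j : ℕ) : ℚ) := by
    intro j hj
    have : j ≤ d := le_of_lt (lt_of_le_of_lt hj hkd)
    push_cast [Nat.cast_sub this]
    ring
  have hne : ∀ j : ℕ, j ≤ k → ((d : ℚ) - j) ≠ 0 := by
    intro j hj
    rw [hcast j hj]
    exact_mod_cast (by omega : d - j ≠ 0)
  -- valuation of d - j for j ≠ r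
  have hval0 : ∀ j : ℕ, j ≤ k → j ≠ r → padicValRat p ((d : ℚ) - j) = 0 := by
    intro j hj hjr
    rw [hcast j hj, padicValRat.of_nat]
    have hnd : ¬ p ∣ (d - j) := by
      intro hdvd
      have h1 : (p : ℤ) ∣ ((d : ℤ) - r) := by
        have := Int.natCast_dvd_natCast.2 hpr
        rwa [Nat.cast_sub hrd.le] at this
      have h2 : (p : ℤ) ∣ ((d : ℤ) - j) := by
        have := Int.natCast_dvd_natCast.2 hdvd
        rwa [Nat.cast_sub (le_of_lt (lt_of_le_of_lt hj hkd))] at this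
      have h3 : (p : ℤ) ∣ ((r : ℤ) - j) := by
        have := dvd_sub h2 h1
        have heq : ((d : ℤ) - j) - ((d : ℤ) - r) = (r : ℤ) - j := by ring
        rwa [heq] at this
      have h4 : (p : ℤ) ≤ |(r : ℤ) - j| :=
        Int.le_of_dvd (abs_pos.2 (sub_ne_zero.2 (by exact_mod_cast Ne.symm hjr)))
          ((dvd_abs _ _).2 h3)
      have h5 : |(r : ℤ) - j| ≤ k := abs_le.2 ⟨by omega, by omega⟩
      have h6 : (k : ℤ) < p := by exact_mod_cast hkp
      linarith
    simp [padicValNat.eq_zero_of_not_dvd hnd]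
  -- valuation of the sign/factorial factor
  have hfacne : ∀ n : ℕ, ((n.factorial : ℚ)) ≠ 0 := fun n => by
    exact_mod_cast n.factorial_ne_zero
  have hsignne : ∀ i : ℕ, ((-1 : ℚ) ^ (k - i) / ((k - i).factorial * i.factorial)) ≠ 0 := by
    intro i
    exact div_ne_zero (pow_ne_zero _ (by norm_num)) (mul_ne_zero (hfacne _) (hfacne _))
  have hfacval : ∀ n : ℕ, n ≤ k → padicValRat p ((n.factorial : ℚ)) = 0 := by
    intro n hn
    rw [show ((n.factorial : ℚ)) = ((n.factorial : ℕ) : ℚ) by push_cast; ring,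
      padicValRat.of_nat]
    have : ¬ p ∣ n.factorial := by
      rw [hprime.dvd_factorial]
      omega
    simp [padicValNat.eq_zero_of_not_dvd this]
  have hsignval : ∀ i : ℕ, i ≤ k →
      padicValRat p ((-1 : ℚ) ^ (k - i) / ((k - i).factorial * i.factorial)) = 0 := by
    intro i hi
    rw [padicValRat.div (pow_ne_zero _ (by norm_num)) (mul_ne_zero (hfacne _) (hfacne _)),
      padicValRat.pow (-1 : ℚ),
      padicValRat.mul (hfacne _) (hfacne _),
      hfacval _ (by omega), hfacval _ hi,
      show padicValRat p (-1 : ℚ) = 0 by rw [← padicValRat.one (p := p), padicValRat.neg]]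
    ring
  -- membership facts
  have hmem : ∀ i : ℕ, i ≤ k → ∀ j ∈ (Finset.range (k + 1)).erase i, j ≤ k ∧ j ≠ i := by
    intro i _ j hj
    rw [Finset.mem_erase, Finset.mem_range] at hj
    exact ⟨by omega, hj.1⟩
  have hprodne : ∀ i : ℕ, i ≤ k →
      (∏ j ∈ (Finset.range (k + 1)).erase i, ((d : ℚ) - (j : ℚ))) ≠ 0 := by
    intro i hi
    exact Finset.prod_ne_zero_iff.2 fun j hj => hne j (hmem i hi j hj).1
  have hcoeffne : ∀ i : ℕ, i ≤ k → belyiCoeff d k i ≠ 0 := fun i hi =>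
    mul_ne_zero (hsignne i) (hprodne i hi)
  -- valuation of belyiCoeff d k r is 0
  have hvdr : (1 : ℤ) ≤ (padicValNat p (d - r) : ℤ) := by
    exact_mod_cast one_le_padicValNat_of_dvd (by omega) hpr
  have hvaldr : padicValRat p ((d : ℚ) - r) = (padicValNat p (d - r) : ℤ) := by
    rw [hcast r hr, padicValRat.of_nat]
  have hcoeffr : padicValRat p (belyiCoeff d k r) = 0 := by
    rw [belyiCoeff, padicValRat.mul (hsignne r) (hprodne r hr), hsignval r hr,
      padicValRat_prod _ _ (fun j hj => hne j (hmem r hr j hj).1), zero_add]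
    exact Finset.sum_eq_zero fun j hj => hval0 j (hmem r hr j hj).1 (hmem r hr j hj).2
  -- valuation of belyiCoeff d k i for i ≠ r
  have hcoeffi : ∀ i : ℕ, i ≤ k → i ≠ r → 1 ≤ padicValRat p (belyiCoeff d k i) := by
    intro i hi hir
    rw [belyiCoeff, padicValRat.mul (hsignne i) (hprodne i hi), hsignval i hi,
      padicValRat_prod _ _ (fun j hj => hne j (hmem i hi j hj).1), zero_add]
    have hrm : r ∈ (Finset.range (k + 1)).erase i := by
      rw [Finset.mem_erase, Finset.mem_range]
      exact ⟨Ne.symm hir, by omega⟩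
    rw [Finset.sum_eq_single_of_mem r hrm
      (fun j hj hjr => hval0 j (hmem i hi j hj).1 hjr), hvaldr]
    exact hvdr
  -- terms
  set T : ℕ → ℚ := fun i => belyiCoeff d k i * x ^ (d - i) with hT
  have hxpow : ∀ i : ℕ, padicValRat p (x ^ (d - i)) = 0 := by
    intro i
    rw [padicValRat.pow x, hvx, mul_zero]
  have hTne : ∀ i : ℕ, i ≤ k → T i ≠ 0 := fun i hi =>
    mul_ne_zero (hcoeffne i hi) (pow_ne_zero _ hx)
  have hTr : padicValRat p (T r) = 0 := by
    rw [hT]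
    simp only
    rw [padicValRat.mul (hcoeffne r hr) (pow_ne_zero _ hx), hcoeffr, hxpow]
    ring
  have hTi : ∀ i : ℕ, i ≤ k → i ≠ r → 1 ≤ padicValRat p (T i) := by
    intro i hi hir
    rw [hT]
    simp only
    rw [padicValRat.mul (hcoeffne i hi) (pow_ne_zero _ hx), hxpow, add_zero]
    exact hcoeffi i hi hir
  -- split the sum
  have hrmem : r ∈ Finset.range (k + 1) := Finset.mem_range.2 (by omega)
  have hsplit : belyi d k x = T r + ∑ i ∈ (Finset.range (k + 1)).erase r, T i := by
    rw [belyi, ← Finset.add_sum_erase _ T hrmem]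
  set S := ∑ i ∈ (Finset.range (k + 1)).erase r, T i with hSdef
  have hS : S = 0 ∨ 1 ≤ padicValRat p S :=
    padicValRat_sum_ge _ _ _ fun i hi =>
      Or.inr (hTi i (hmem r hr i hi).1 (hmem r hr i hi).2)
  have hBne : belyi d k x ≠ 0 ∧ padicValRat p (belyi d k x) = 0 := by
    rcases hS with h0 | h1
    · rw [hsplit, h0, add_zero]
      exact ⟨hTne r hr, hTr⟩
    · have hSne : S ≠ 0 := by
        intro h
        rw [h, padicValRat.zero] at h1
        omega
      have hlt : padicValRat p (T r) < padicValRat p S := by omega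
      constructor
      · rw [hsplit]
        intro h
        have : T r = -S := by linarith [add_eq_zero_iff_eq_neg.1 h]
        rw [this, padicValRat.neg] at hTr
        omega
      · rw [hsplit]
        have hne0 : T r + S ≠ 0 := by
          intro h
          have : T r = -S := by linarith [add_eq_zero_iff_eq_neg.1 h]
          rw [this, padicValRat.neg] at hTr
          omega
        rw [padicValRat.add_eq_of_lt hne0 (hTne r hr) hSne hlt, hTr]
  -- final assembly
  have hAne : α * belyi d k x ≠ 0 := mul_ne_zero hα hBne.1
  have hvA : padicValRat p (α * belyi d k x) = padicValRat p α := by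
    rw [padicValRat.mul hα hBne.1, hBne.2, add_zero]
  constructor
  · intro hf0
    have := padicValRat.min_le_padicValRat_add (p := p)
      (q := α * belyi d k x) (r := β) (by rwa [belyiMap] at hf0)
    rw [hvA] at this
    rwa [belyiMap]
  · intro hvne _
    have hvals : padicValRat p (α * belyi d k x) ≠ padicValRat p β := by rw [hvA]; exact hvne
    have hf0 : α * belyi d k x + β ≠ 0 := by
      intro h
      have hβeq : β = -(α * belyi d k x) := by linarith [add_eq_zero_iff_eq_neg.1 h]
      rw [hβeq, padicValRat.neg] at hvals
      exact hvals rfl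
    refine ⟨by rwa [belyiMap], ?_⟩
    rw [belyiMap, padicValRat.add_eq_min hf0 hAne hβ hvals, hvA]
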